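/- Let n ≥ 2 be an integer and let u : ℝⁿ → ℝ be a convex C² function with |∇u(x)| < 1 for all x ∈ ℝⁿ satisfying the translating soliton equation Δu(x) + D²u(x)(∇u(x), ∇u(x))/(1 − |∇u(x)|²) = 1 for all x ∈ ℝⁿ, and let V_u(x) = lim_{ρ→∞} u(ρx)/ρ be its blowdown. Then |y|² ≤ V_u(y) ≤ |y| for every y in the closure of the gradient image ∇u(ℝⁿ) = {∇u(x) : x ∈ ℝⁿ}. -/

import Mathlib

open Set Filter Topology

theorem stmt_15 (n : ℕ) (hn : 2 ≤ n) (u : EuclideanSpace ℝ (Fin n) → ℝ)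
    (hconv : ConvexOn ℝ Set.univ u)
    (hC2 : ContDiff ℝ 2 u)
    (hsp : ∀ x, ‖gradient u x‖ < 1)
    (heq : ∀ x : EuclideanSpace ℝ (Fin n),
      (∑ i : Fin n, iteratedFDeriv ℝ 2 u x
          ![EuclideanSpace.single i 1, EuclideanSpace.single i 1]) +
        iteratedFDeriv ℝ 2 u x ![gradient u x, gradient u x] /
          (1 - ‖gradient u x‖ ^ 2) = 1)
    (V : EuclideanSpace ℝ (Fin n) → ℝ)
    (hV : ∀ x, Filter.Tendsto (fun ρ : ℝ => u (ρ • x) / ρ) Filter.atTop (nhds (V x))) :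
    ∀ y ∈ closure (Set.range (gradient u)), ‖y‖ ^ 2 ≤ V y ∧ V y ≤ ‖y‖ := by
  have hdiff : Differentiable ℝ u := hC2.differentiable (by norm_num)
  -- fderiv applied equals inner ℝ with gradient
  have hfg : ∀ x v, fderiv ℝ u x v = inner ℝ (gradient u x) v := by
    intro x v
    rw [gradient]
    exact (InnerProductSpace.toDual_symm_apply).symm
  -- norm of gradient equals norm of fderiv
  have hng : ∀ x, ‖fderiv ℝ u x‖ = ‖gradient u x‖ := by
    intro x
    rw [gradient]
    exact ((InnerProductSpace.toDual ℝ _).symm.norm_map _).symm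
  -- supporting hyperplane inequality
  have hsupp : ∀ a b, u a + inner ℝ (gradient u a) (b - a) ≤ u b := by
    intro a b
    have hg : ConvexOn ℝ (Set.univ : Set ℝ) (fun t : ℝ => u (t • (b - a) + a)) := by
      have h := hconv.comp_affineMap (AffineMap.lineMap a b)
      convert h using 1
      · rfl
      · rfl
      · rfl
      · rfl
      · simp
      · funext t
        simp [Function.comp, AffineMap.lineMap_apply, vsub_eq_sub, vadd_eq_add]
    have h1 : HasDerivAt (fun t : ℝ => t • (b - a) + a) (b - a) 0 := by
      simpa using ((hasDerivAt_id (0 : ℝ)).smul_const (b - a)).add_const a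
    have h2 : HasDerivAt (fun t : ℝ => u (t • (b - a) + a)) (fderiv ℝ u a (b - a)) 0 := by
      have hf : HasFDerivAt u (fderiv ℝ u a) ((fun t : ℝ => t • (b - a) + a) 0) := by
        simpa using (hdiff a).hasFDerivAt
      exact hf.comp_hasDerivAt 0 h1
    have h3 := hg.le_slope_of_hasDerivAt (mem_univ (0 : ℝ)) (mem_univ (1 : ℝ)) zero_lt_one h2
    have h4 : slope (fun t : ℝ => u (t • (b - a) + a)) 0 1 = u b - u a := by
      simp [slope_def_field]
    rw [h4, hfg] at h3
    linarith
  intro y hy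
  constructor
  · -- lower bound
    have hlow : ∀ z ∈ Set.range (gradient u), (inner ℝ z y : ℝ) ≤ V y := by
      rintro z ⟨x0, rfl⟩
      set z := gradient u x0
      have hle : ∀ᶠ ρ : ℝ in atTop,
          (inner ℝ z y : ℝ) + (u x0 - inner ℝ z x0) / ρ ≤ u (ρ • y) / ρ := by
        filter_upwards [eventually_gt_atTop (0 : ℝ)] with ρ hρ
        have h1 := hsupp x0 (ρ • y)
        have h2 : (inner ℝ z (ρ • y - x0) : ℝ) = ρ * inner ℝ z y - inner ℝ z x0 := by
          rw [inner_sub_right, real_inner_smul_right]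
        have h3 : u x0 + (ρ * inner ℝ z y - inner ℝ z x0) ≤ u (ρ • y) := by
          rw [← h2]; exact h1
        have h4 : (u x0 + (ρ * inner ℝ z y - inner ℝ z x0)) / ρ
            = (inner ℝ z y : ℝ) + (u x0 - inner ℝ z x0) / ρ := by
          field_simp
          ring
        have h5 : (u x0 + (ρ * inner ℝ z y - inner ℝ z x0)) / ρ ≤ u (ρ • y) / ρ :=
          (div_le_div_iff_of_pos_right hρ).mpr h3
        rw [← h4]
        exact h5
      have htend : Tendsto (fun ρ : ℝ => (inner ℝ z y : ℝ) + (u x0 - inner ℝ z x0) / ρ) atTop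
          (nhds (inner ℝ z y)) := by
        have : Tendsto (fun ρ : ℝ => (u x0 - inner ℝ z x0) / ρ) atTop (nhds 0) :=
          tendsto_const_nhds.div_atTop tendsto_id
        simpa using tendsto_const_nhds.add this
      exact le_of_tendsto_of_tendsto htend (hV y) hle
    have hclosed : IsClosed {z : EuclideanSpace ℝ (Fin n) | (inner ℝ z y : ℝ) ≤ V y} :=
      isClosed_le (continuous_id.inner continuous_const) continuous_const
    have : (inner ℝ y y : ℝ) ≤ V y := by
      have := closure_minimal hlow hclosed hy
      exact this
    rwa [real_inner_self_eq_norm_sq] at this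
  · -- upper bound
    have hlip : ∀ ρ : ℝ, u (ρ • y) - u 0 ≤ ‖ρ • y‖ := by
      intro ρ
      have h := Convex.norm_image_sub_le_of_norm_fderiv_le
        (fun x _ => hdiff x)
        (fun x _ => by rw [hng]; exact (hsp x).le) convex_univ (mem_univ (0 : EuclideanSpace ℝ (Fin n)))
        (mem_univ (ρ • y))
      simp only [sub_zero, one_mul] at h
      calc u (ρ • y) - u 0 ≤ ‖u (ρ • y) - u 0‖ := le_abs_self _
        _ ≤ ‖ρ • y‖ := h
    have hle : ∀ᶠ ρ : ℝ in atTop, u (ρ • y) / ρ ≤ ‖y‖ + u 0 / ρ := by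
      filter_upwards [eventually_gt_atTop (0 : ℝ)] with ρ hρ
      have h1 : u (ρ • y) ≤ ρ * ‖y‖ + u 0 := by
        have := hlip ρ
        rw [norm_smul, Real.norm_eq_abs, abs_of_pos hρ] at this
        linarith
      have h2 : u (ρ • y) / ρ ≤ (ρ * ‖y‖ + u 0) / ρ := (div_le_div_iff_of_pos_right hρ).mpr h1
      have h3 : (ρ * ‖y‖ + u 0) / ρ = ‖y‖ + u 0 / ρ := by
        field_simp
      linarith [h2, h3.le, h3.ge]
    have htend : Tendsto (fun ρ : ℝ => ‖y‖ + u 0 / ρ) atTop (nhds ‖y‖) := by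
      have : Tendsto (fun ρ : ℝ => u 0 / ρ) atTop (nhds 0) :=
        tendsto_const_nhds.div_atTop tendsto_id
      simpa using tendsto_const_nhds.add this
    exact le_of_tendsto_of_tendsto (hV y) htend hle
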